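/- Suppose a root sequence of length k evolves down a tree of depth H = O(log n), where on each edge each site is independently inserted-next-to or deleted with total probability p_id ≤ α/(4·d·k^{2/3}·a) with a ≥ C·log n. Then for any ζ > 0 there is C' > 0 such that if k ≥ C'·log³n, with probability 1 - 1/poly(n) every node's sequence length lies in [(1-ζ)k, (1+ζ)k]. -/

import Mathlib

/-- Length of a child sequence given a parent sequence of length m: each of the m sites
is independently deleted with probability p_d and has a new site inserted next to it
with probability p_i, so the child length is m - Bin(m,p_d) + Bin(m,p_i). -/
noncomputable def childLenPMF (pins pdel : ℝ) (m : ℕ) : PMF ℕ :=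
  (PMF.binomial (min (Real.toNNReal pdel) 1) (min_le_right _ _) m).bind fun del =>
    (PMF.binomial (min (Real.toNNReal pins) 1) (min_le_right _ _) m).map fun ins =>
      m - (del : ℕ) + (ins : ℕ)

/-- Whether all of `c` independent children (of a node whose sequence has length m),
together with their descendant subtrees of height `hgt`, have all sequence lengths
satisfying the predicate `good`; `f m'` is the corresponding event for a single child
subtree whose root sequence has length m'. -/
noncomputable def childrenGood (pins pdel : ℝ) (f : ℕ → PMF Bool) (m : ℕ) : ℕ → PMF Bool
  | 0 => PMF.pure true
  | c + 1 =>
      (childLenPMF pins pdel m).bind fun m' =>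
        (f m').bind fun b => (childrenGood pins pdel f m c).map fun b2 => b && b2

/-- `allGood pins pdel good d hgt m` is the probability distribution of the event that
in the d-ary tree of height `hgt` whose root sequence has length m, every node's
sequence length satisfies `good`. -/
noncomputable def allGood (pins pdel : ℝ) (good : ℕ → Bool) (d : ℕ) : ℕ → ℕ → PMF Bool
  | 0, m => PMF.pure (good m)
  | hgt + 1, m =>
      if good m then childrenGood pins pdel (fun m' => allGood pins pdel good d hgt m') m d
      else PMF.pure false

open scoped ENNReal

lemma exp_sixth_le : Real.exp (1/6) ≤ 6/5 := by
  have h := Real.add_one_le_exp (-(1/6 : ℝ))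
  have h2 : Real.exp (-(1/6:ℝ)) * Real.exp (1/6) = 1 := by
    rw [← Real.exp_add]; norm_num
  nlinarith [Real.exp_pos (1/6 : ℝ)]

lemma tail_real (m s : ℕ) (p : ℝ) (h0 : 0 ≤ p) (h1 : p ≤ 1) (hs : 6 * m * p ≤ s) :
    ∑ i ∈ Finset.range (m+1), (if s ≤ i then p^i * (1-p)^(m-i) * (m.choose i : ℝ) else 0)
      ≤ (3/5 : ℝ)^s := by
  have hp1 : (0:ℝ) ≤ 1 - p := by linarith
  have h2p : (0:ℝ) ≤ 2*p := by linarith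
  have step : ∀ i ∈ Finset.range (m+1),
      (if s ≤ i then p^i * (1-p)^(m-i) * (m.choose i : ℝ) else 0)
        ≤ (1/2:ℝ)^s * ((2*p)^i * (1-p)^(m-i) * (m.choose i : ℝ)) := by
    intro i _
    split_ifs with hsi
    · have key : p^i ≤ (1/2:ℝ)^s * (2*p)^i := by
        have hrw : p^i = (1/2:ℝ)^i * (2*p)^i := by rw [← mul_pow]; ring_nf
        rw [hrw]
        exact mul_le_mul_of_nonneg_right
          (pow_le_pow_of_le_one (by norm_num) (by norm_num) hsi) (pow_nonneg h2p i)
      calc p^i * (1-p)^(m-i) * (m.choose i : ℝ)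
          ≤ ((1/2:ℝ)^s * (2*p)^i) * (1-p)^(m-i) * (m.choose i : ℝ) := by
            apply mul_le_mul_of_nonneg_right _ (by positivity)
            exact mul_le_mul_of_nonneg_right key (pow_nonneg hp1 _)
        _ = (1/2:ℝ)^s * ((2*p)^i * (1-p)^(m-i) * (m.choose i : ℝ)) := by ring
    · positivity
  calc ∑ i ∈ Finset.range (m+1), (if s ≤ i then p^i * (1-p)^(m-i) * (m.choose i : ℝ) else 0)
      ≤ ∑ i ∈ Finset.range (m+1), (1/2:ℝ)^s * ((2*p)^i * (1-p)^(m-i) * (m.choose i : ℝ)) :=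
        Finset.sum_le_sum step
    _ = (1/2:ℝ)^s * (2*p + (1-p))^m := by
        rw [← Finset.mul_sum, add_pow]
    _ ≤ (1/2:ℝ)^s * (6/5:ℝ)^s := by
        apply mul_le_mul_of_nonneg_left _ (by positivity)
        have e1 : 2*p + (1-p) = 1 + p := by ring
        rw [e1]
        calc (1+p)^m ≤ (Real.exp p)^m := by
              apply pow_le_pow_left₀ (by linarith) _ m
              linarith [Real.add_one_le_exp p]
          _ = Real.exp (m * p) := by rw [← Real.exp_nat_mul]
          _ ≤ Real.exp ((s:ℝ) * (1/6)) := by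
              apply Real.exp_le_exp.2; linarith
          _ = (Real.exp (1/6))^s := by rw [← Real.exp_nat_mul]
          _ ≤ (6/5:ℝ)^s := pow_le_pow_left₀ (Real.exp_nonneg _) exp_sixth_le s
    _ = (3/5:ℝ)^s := by rw [← mul_pow]; norm_num

lemma binom_val (p : ℝ) (h0 : 0 ≤ p) (h1 : p ≤ 1) (m : ℕ) (i : Fin (m+1)) :
    (PMF.binomial (min (Real.toNNReal p) 1) (min_le_right _ _) m) i
      = ENNReal.ofReal (p^(i:ℕ) * (1-p)^(m-(i:ℕ)) * (m.choose i : ℝ)) := by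
  have hple : p.toNNReal ≤ 1 := Real.toNNReal_le_one.mpr h1
  rw [PMF.binomial_apply, min_eq_left hple, Fin.val_last, ← ENNReal.ofReal_coe_nnreal]
  congr 1
  push_cast [NNReal.coe_sub hple, Real.coe_toNNReal _ h0]
  have honem : (1 : ℝ≥0∞) - ENNReal.ofReal p = ENNReal.ofReal (1-p) := by
    rw [← ENNReal.ofReal_one, ← ENNReal.ofReal_sub _ h0]
  have hq1 : (0:ℝ) ≤ 1 - p := by linarith
  have e1 : (0:ℝ) ≤ p^(i:ℕ) := pow_nonneg h0 _
  have e2 : (0:ℝ) ≤ p^(i:ℕ) * (1-p)^(m-(i:ℕ)) := mul_nonneg e1 (pow_nonneg hq1 _)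
  rw [honem, ← ENNReal.ofReal_pow h0, ← ENNReal.ofReal_pow hq1,
    ← ENNReal.ofReal_natCast (m.choose i), ← ENNReal.ofReal_mul e1,
    ← ENNReal.ofReal_mul e2]

lemma binom_weighted (p : ℝ) (h0 : 0 ≤ p) (h1 : p ≤ 1) (m s : ℕ) (hs : 6 * m * p ≤ s)
    (B : ℝ≥0∞) (g : Fin (m+1) → ℝ≥0∞) (hg1 : ∀ i, g i ≤ 1)
    (hgB : ∀ i : Fin (m+1), (i:ℕ) < s → g i ≤ B) :
    ∑' i, (PMF.binomial (min (Real.toNNReal p) 1) (min_le_right _ _) m) i * g i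
      ≤ ENNReal.ofReal ((3/5:ℝ)^s) + B := by
  set q := PMF.binomial (min (Real.toNNReal p) 1) (min_le_right _ _) m with hq
  rw [tsum_fintype]
  have hpt : ∀ i : Fin (m+1), q i * g i
      ≤ (if s ≤ (i:ℕ) then q i else 0) + q i * B := by
    intro i
    by_cases hsi : s ≤ (i:ℕ)
    · simp only [if_pos hsi]
      calc q i * g i ≤ q i * 1 := mul_le_mul_right (hg1 i) _
        _ = q i := mul_one _
        _ ≤ q i + q i * B := le_self_add
    · simp only [if_neg hsi]
      calc q i * g i ≤ q i * B := mul_le_mul_right (hgB i (not_le.1 hsi)) _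
        _ ≤ (0:ℝ≥0∞) + q i * B := by rw [zero_add]
  calc ∑ i : Fin (m+1), q i * g i
      ≤ ∑ i : Fin (m+1), ((if s ≤ (i:ℕ) then q i else 0) + q i * B) :=
        Finset.sum_le_sum (fun i _ => hpt i)
    _ = (∑ i : Fin (m+1), if s ≤ (i:ℕ) then q i else 0) + (∑ i : Fin (m+1), q i) * B := by
        rw [Finset.sum_add_distrib, Finset.sum_mul]
    _ ≤ ENNReal.ofReal ((3/5:ℝ)^s) + B := by
        gcongr
        · have hval : ∀ i : Fin (m+1), (if s ≤ (i:ℕ) then q i else 0)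
              = ENNReal.ofReal (if s ≤ (i:ℕ) then p^(i:ℕ) * (1-p)^(m-(i:ℕ)) * (m.choose i : ℝ) else 0) := by
            intro i
            split_ifs
            · exact binom_val p h0 h1 m i
            · simp
          calc (∑ i : Fin (m+1), if s ≤ (i:ℕ) then q i else 0)
              = ENNReal.ofReal (∑ i : Fin (m+1),
                  if s ≤ (i:ℕ) then p^(i:ℕ) * (1-p)^(m-(i:ℕ)) * (m.choose i : ℝ) else 0) := by
                rw [ENNReal.ofReal_sum_of_nonneg]
                · exact Finset.sum_congr rfl (fun i _ => hval i)
                · intro i _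
                  have hnn : (0:ℝ) ≤ p^(i:ℕ) * (1-p)^(m-(i:ℕ)) * (m.choose i : ℝ) := by
                    have : (0:ℝ) ≤ 1 - p := by linarith
                    positivity
                  split_ifs
                  · exact hnn
                  · exact le_refl 0
            _ ≤ ENNReal.ofReal ((3/5:ℝ)^s) := by
                apply ENNReal.ofReal_le_ofReal
                rw [Fin.sum_univ_eq_sum_range
                  (fun i => if s ≤ i then p^i * (1-p)^(m-i) * (m.choose i : ℝ) else 0)]
                exact tail_real m s p h0 h1 hs
        · have h1q := q.tsum_coe
          rw [tsum_fintype] at h1q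
          rw [h1q, one_mul]

lemma bind_bool_false (P : PMF Bool) (r : PMF Bool) :
    (P.bind fun b => r.map fun b2 => b && b2) false ≤ P false + r false := by
  rw [PMF.bind_apply, tsum_bool]
  have h1 : (r.map fun b2 => false && b2) false = 1 := by
    have : (fun b2 => false && b2) = Function.const Bool false := by
      funext b2; simp
    rw [this, PMF.map_const, PMF.pure_apply]; simp
  have h2 : (r.map fun b2 => true && b2) false = r false := by
    have : (fun b2 => true && b2) = id := by funext b2; simp
    rw [this, PMF.map_id]
  rw [h1, h2, mul_one]
  have := mul_le_mul_left (PMF.coe_le_one P true) (r false)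
  rw [one_mul] at this
  exact add_le_add le_rfl this

lemma childLen_bind_eq (pins pdel : ℝ) (m : ℕ) (f : ℕ → PMF Bool) :
    ((childLenPMF pins pdel m).bind f)
      = (PMF.binomial (min (Real.toNNReal pdel) 1) (min_le_right _ _) m).bind fun del =>
          (PMF.binomial (min (Real.toNNReal pins) 1) (min_le_right _ _) m).bind fun ins =>
            f (m - (del:ℕ) + (ins:ℕ)) := by
  have hpure : (Pure.pure : ℕ → PMF ℕ) = PMF.pure := rfl
  simp only [childLenPMF, PMF.map, bind, hpure, PMF.bind_bind, PMF.pure_bind, Function.comp]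

lemma childrenGood_false_le (pins pdel : ℝ) (f : ℕ → PMF Bool) (m : ℕ) :
    ∀ c, (childrenGood pins pdel f m c) false
      ≤ c * ((childLenPMF pins pdel m).bind f) false := by
  intro c
  induction c with
  | zero => simp [childrenGood, PMF.pure_apply]
  | succ c ih =>
      have h1 : childrenGood pins pdel f m (c+1)
          = ((childLenPMF pins pdel m).bind f).bind fun b =>
              (childrenGood pins pdel f m c).map fun b2 => b && b2 := by
        rw [childrenGood, PMF.bind_bind]
      rw [h1]
      calc (((childLenPMF pins pdel m).bind f).bind fun b =>
              (childrenGood pins pdel f m c).map fun b2 => b && b2) false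
          ≤ ((childLenPMF pins pdel m).bind f) false
            + (childrenGood pins pdel f m c) false := bind_bool_false _ _
        _ ≤ ((childLenPMF pins pdel m).bind f) false
            + c * ((childLenPMF pins pdel m).bind f) false := add_le_add le_rfl ih
        _ = (↑(c+1) : ℝ≥0∞) * ((childLenPMF pins pdel m).bind f) false := by
            push_cast; ring

def Ntree (d : ℕ) : ℕ → ℕ
  | 0 => 0
  | h+1 => d * (Ntree d h + 1)

lemma Ntree_le (d : ℕ) (hd : 2 ≤ d) : ∀ h, Ntree d h + 2 ≤ 2 * d^h := by
  intro h
  induction h with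
  | zero => simp [Ntree]
  | succ h ih =>
      have hpow : 1 ≤ d^h := Nat.one_le_pow _ _ (by omega)
      have : d * (Ntree d h + 2) ≤ d * (2 * d^h) := Nat.mul_le_mul_left d ih
      simp only [Ntree, pow_succ]
      nlinarith
lemma allGood_false_le
    (pins pdel : ℝ) (h0i : 0 ≤ pins) (h1i : pins ≤ 1) (h0d : 0 ≤ pdel) (h1d : pdel ≤ 1)
    (good : ℕ → Bool) (d T k H : ℕ)
    (hgood : ∀ m : ℕ, |(m:ℝ) - k| ≤ (H:ℝ) * T → good m = true)
    (hsmall : ∀ m : ℕ, |(m:ℝ) - k| ≤ (H:ℝ) * T →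
        6 * m * pins ≤ (T:ℝ)+1 ∧ 6 * m * pdel ≤ (T:ℝ)+1) :
    ∀ hgt, hgt ≤ H → ∀ m : ℕ, |(m:ℝ) - k| ≤ ((H:ℝ) - hgt) * T →
      (allGood pins pdel good d hgt m) false
        ≤ (Ntree d hgt : ℝ≥0∞) * ENNReal.ofReal (2 * (3/5:ℝ)^(T+1)) := by
  intro hgt
  induction hgt with
  | zero =>
      intro _ m hm
      have hg : good m = true := hgood m (by simpa using hm)
      simp [allGood, hg, PMF.pure_apply]
  | succ hgt ih =>
      intro hH m hm
      have hTnn : (0:ℝ) ≤ (T:ℝ) := Nat.cast_nonneg T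
      have hwin : |(m:ℝ) - k| ≤ (H:ℝ) * T := by
        refine le_trans hm (mul_le_mul_of_nonneg_right ?_ hTnn)
        have : (0:ℝ) ≤ ((hgt:ℝ)+1) := by positivity
        push_cast
        linarith
      have hgm : good m = true := hgood m hwin
      have hrw : allGood pins pdel good d (hgt+1) m
          = childrenGood pins pdel (fun m' => allGood pins pdel good d hgt m') m d := by
        simp [allGood, hgm]
      rw [hrw]
      set ε := ENNReal.ofReal (2 * (3/5:ℝ)^(T+1)) with hε
      have hbind : ((childLenPMF pins pdel m).bind
            (fun m' => allGood pins pdel good d hgt m')) false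
          ≤ (1 + (Ntree d hgt : ℝ≥0∞)) * ε := by
        rw [childLen_bind_eq, PMF.bind_apply]
        have hexp : ((H:ℝ) - (↑(hgt+1):ℝ)) * T = ((H:ℝ) - hgt) * T - T := by
          push_cast; ring
        have hinner : ∀ del : Fin (m+1), (del:ℕ) < T+1 →
            ((PMF.binomial (min (Real.toNNReal pins) 1) (min_le_right _ _) m).bind fun ins =>
              allGood pins pdel good d hgt (m - (del:ℕ) + (ins:ℕ))) false
            ≤ ENNReal.ofReal ((3/5:ℝ)^(T+1)) + (Ntree d hgt : ℝ≥0∞) * ε := by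
          intro del hdel
          rw [PMF.bind_apply]
          apply binom_weighted pins h0i h1i m (T+1)
            (by push_cast; exact (hsmall m hwin).1)
          · intro i; exact PMF.coe_le_one _ _
          · intro ins hins
            apply ih (le_trans (Nat.le_succ hgt) hH)
            have hdm : (del:ℕ) ≤ m := Nat.lt_succ_iff.1 del.isLt
            have hc : ((m - (del:ℕ) + (ins:ℕ) : ℕ) : ℝ) = (m:ℝ) - ((del:ℕ):ℝ) + ((ins:ℕ):ℝ) := by
              push_cast [Nat.cast_sub hdm]
              ring
            rw [hc]
            have hd' : ((del:ℕ):ℝ) ≤ (T:ℝ) := by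
              exact_mod_cast Nat.lt_succ_iff.1 hdel
            have hi' : ((ins:ℕ):ℝ) ≤ (T:ℝ) := by
              exact_mod_cast Nat.lt_succ_iff.1 hins
            have hdnn : (0:ℝ) ≤ ((del:ℕ):ℝ) := Nat.cast_nonneg _
            have hinn : (0:ℝ) ≤ ((ins:ℕ):ℝ) := Nat.cast_nonneg _
            rw [hexp] at hm
            rw [abs_le] at hm ⊢
            constructor <;> linarith [hm.1, hm.2]
        calc ∑' del : Fin (m+1),
              (PMF.binomial (min (Real.toNNReal pdel) 1) (min_le_right _ _) m) del *
              ((PMF.binomial (min (Real.toNNReal pins) 1) (min_le_right _ _) m).bind fun ins =>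
                allGood pins pdel good d hgt (m - (del:ℕ) + (ins:ℕ))) false
            ≤ ENNReal.ofReal ((3/5:ℝ)^(T+1))
              + (ENNReal.ofReal ((3/5:ℝ)^(T+1)) + (Ntree d hgt : ℝ≥0∞) * ε) := by
              apply binom_weighted pdel h0d h1d m (T+1)
                (by push_cast; exact (hsmall m hwin).2)
              · intro i; exact PMF.coe_le_one _ _
              · exact hinner
          _ = (1 + (Ntree d hgt : ℝ≥0∞)) * ε := by
              rw [← add_assoc, ← ENNReal.ofReal_add (by positivity) (by positivity), hε]
              rw [add_mul, one_mul]
              have h2 : (3/5:ℝ)^(T+1) + (3/5:ℝ)^(T+1) = 2*(3/5:ℝ)^(T+1) := by ring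
              rw [h2]
      calc (childrenGood pins pdel (fun m' => allGood pins pdel good d hgt m') m d) false
          ≤ d * ((childLenPMF pins pdel m).bind
              (fun m' => allGood pins pdel good d hgt m')) false :=
            childrenGood_false_le _ _ _ _ _
        _ ≤ d * ((1 + (Ntree d hgt : ℝ≥0∞)) * ε) := mul_le_mul_right hbind _
        _ = (Ntree d (hgt+1) : ℝ≥0∞) * ε := by
            rw [Ntree]
            push_cast
            ring
section arith
variable {z L k H D a r α m p T x : ℝ}

lemma arith_hC' (hz0 : 0 < z) (hz1 : z ≤ 1) (hD : 0 < D) : (20:ℝ) ≤ (6*D+20)/z := by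
  rw [le_div_iff₀ hz0]; nlinarith

lemma arith_k1 (hC' : (20:ℝ) ≤ c') (hL1 : 1 ≤ L) (hck : c' * L^3 ≤ k) : (1:ℝ) ≤ k := by
  have hL3 : (1:ℝ) ≤ L^3 := one_le_pow₀ hL1
  nlinarith

lemma arith_apos (hz0 : 0 < z) (hz1 : z ≤ 1) (hL1 : 1 ≤ L) (ha : 4/z * L ≤ a) : (4:ℝ) ≤ a := by
  rw [div_mul_eq_mul_div, div_le_iff₀ hz0] at ha
  nlinarith

lemma arith_ps (hd3 : (3:ℝ) ≤ d) (hr1 : 1 ≤ r) (ha4 : 4 ≤ a) (hα0 : 0 < α) (hα1 : α ≤ 1)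
    (hq : q ≤ α / (4 * d * r * a)) : q ≤ 1/(12 * r * a) := by
  have hra : (0:ℝ) < 12 * r * a := by nlinarith
  have hden : (0:ℝ) < 4 * d * r * a := by nlinarith
  calc q ≤ α / (4 * d * r * a) := hq
    _ ≤ 1/(12 * r * a) := by
        rw [div_le_div_iff₀ hden hra]
        nlinarith

lemma arith_frac (hr1 : 1 ≤ r) (ha4 : 4 ≤ a) : 1/(12 * r * a) ≤ 1/48 := by
  have hra : (0:ℝ) < 12 * r * a := by nlinarith
  rw [div_le_div_iff₀ hra (by norm_num)]
  nlinarith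

lemma arith_xge (hz0 : 0 < z) (hL1 : 1 ≤ L) (hHL : H ≤ L) (hH : 0 < H) (hD : 0 < D)
    (hck : (6*D+20)/z * L^3 ≤ k) : (6*D+20)/2 * L^2 ≤ z * k / (2*H) := by
  rw [le_div_iff₀ (by linarith : (0:ℝ) < 2*H)]
  rw [div_mul_eq_mul_div, div_le_iff₀ hz0] at hck
  have hLH : L^2 * H ≤ L^3 := by nlinarith
  nlinarith

lemma arith_window (hz0 : 0 < z) (hz1 : z ≤ 1) (hzζ : z ≤ ζ) (hζ : 0 < ζ) (hk0 : 0 < k)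
    (h1 : m - k ≤ z * k / 2) (h2 : -(z * k / 2) ≤ m - k) :
    m ≤ 3/2 * k ∧ (1-ζ)*k ≤ m ∧ m ≤ (1+ζ)*k := by
  have hzk : z * k ≤ ζ * k * 2 := by nlinarith
  have hzk2 : z * k ≤ k := by nlinarith
  exact ⟨by nlinarith, by nlinarith, by nlinarith⟩

lemma arith_small (hm32 : m ≤ 3/2 * k) (hm0 : 0 ≤ m) (hk0 : 0 < k) (hr1 : 1 ≤ r) (ha4 : 4 ≤ a)
    (hz0 : 0 < z) (hH : 0 < H) (hza : 4 * H ≤ z * a)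
    (hp0 : 0 ≤ p) (hple : p ≤ 1/(12 * r * a)) (hxT : z * k / (2*H) ≤ T + 1) :
    6 * m * p ≤ T + 1 := by
  have hra : (0:ℝ) < 12 * r * a := by nlinarith
  have h9 : 6 * m * p ≤ 9 * k * p := by nlinarith
  have h10 : 9 * k * p ≤ 9 * k / (12 * r * a) := by
    rw [le_div_iff₀ hra]
    have hp1 : p * (12 * r * a) ≤ 1 := (le_div_iff₀ hra).1 hple
    nlinarith
  have h11 : 9 * k / (12 * r * a) ≤ z * k / (2*H) := by
    rw [div_le_div_iff₀ hra (by linarith : (0:ℝ) < 2*H)]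
    have hzra : 4 * H * r ≤ z * r * a := by nlinarith
    have hr4H : 4 * H ≤ 4 * H * r := by nlinarith
    nlinarith
  linarith

lemma arith_Tbig (hD : 0 < D) (hL1 : 1 ≤ L) (hxge : (6*D+20)/2 * L^2 ≤ x) (hxT : x ≤ T + 1) :
    (3*D+10) * L ≤ T + 1 := by
  have hL2 : L ≤ L^2 := by nlinarith
  nlinarith

lemma arith_exp (hD : 0 < D) (hL1 : 1 ≤ L) (hT : (3*D+10) * L ≤ T + 1) :
    2 + L + (-(2/5) * (T+1)) ≤ L * (-D) := by
  have h := mul_le_mul_of_nonneg_left hT (by norm_num : (0:ℝ) ≤ 2/5)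
  nlinarith

end arith

lemma arith_za {z L H a : ℝ} (hz0 : 0 < z) (hHL : H ≤ L) (ha : 4/z * L ≤ a) :
    4 * H ≤ z * a := by
  rw [div_mul_eq_mul_div, div_le_iff₀ hz0] at ha
  nlinarith

lemma four_le_exp_two : (4:ℝ) ≤ Real.exp 2 := by
  have h2 : (2:ℝ) ≤ Real.exp 1 := by
    have h := Real.exp_one_gt_d9; linarith only [h]
  calc (4:ℝ) = 2 * 2 := by norm_num
    _ ≤ Real.exp 1 * Real.exp 1 := by nlinarith [Real.exp_pos 1]
    _ = Real.exp 2 := by rw [← Real.exp_add]; norm_num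
set_option maxHeartbeats 1000000 in
/-- A root sequence of length k evolves down a d-ary tree of height H
(n = d^H leaves), each site independently inserted-next-to/deleted with total
probability p_i + p_d ≤ α/(4·d·k^{2/3}·a), a ≥ C·log n. For any ζ > 0 (and any
polynomial degree D) there is C' > 0 such that if k ≥ C'·log³n, then with probability
at least 1 - n^{-D} every node's sequence length lies in [(1-ζ)k, (1+ζ)k]. -/
theorem stmt18 (ζ D : ℝ) (hζ : 0 < ζ) (hD : 0 < D) :
    ∃ C' : ℝ, 0 < C' ∧ ∃ C : ℝ, 0 < C ∧
      ∀ (d H k : ℕ) (a α pins pdel : ℝ), 3 ≤ d → 1 ≤ H →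
        C * Real.log ((d : ℝ) ^ H) ≤ a →
        0 < α → α ≤ 1 → 0 ≤ pins → 0 ≤ pdel →
        pins + pdel ≤ α / (4 * d * (k : ℝ) ^ ((2:ℝ)/3) * a) →
        C' * (Real.log ((d : ℝ) ^ H)) ^ 3 ≤ (k : ℝ) →
        ((allGood pins pdel
            (fun m => decide ((1 - ζ) * k ≤ (m : ℝ) ∧ (m : ℝ) ≤ (1 + ζ) * k)) d H k)
            true).toReal
          ≥ 1 - ((d : ℝ) ^ H) ^ (-D) := by
  set z := min ζ 1 with hzdef
  have hz0 : 0 < z := lt_min hζ one_pos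
  have hz1 : z ≤ 1 := min_le_right _ _
  have hzζ : z ≤ ζ := min_le_left _ _
  refine ⟨(6*D+20)/z, by positivity, 4/z, by positivity, ?_⟩
  intro d H k a α pins pdel hd hH ha hα0 hα1 hpi0 hpd0 hpsum hk
  set L := Real.log ((d:ℝ)^H) with hLdef
  set n := ((d:ℝ)^H) with hndef
  -- basic facts
  have hd3 : (3:ℝ) ≤ (d:ℝ) := by exact_mod_cast hd
  have hn3 : (3:ℝ) ≤ n := by
    calc (3:ℝ) ≤ (d:ℝ) := hd3
      _ = (d:ℝ)^1 := (pow_one _).symm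
      _ ≤ (d:ℝ)^H := pow_le_pow_right₀ (by linarith only [hd3]) hH
  have hnpos : (0:ℝ) < n := by linarith only [hn3]
  have he1 : Real.exp 1 < 3 := by
    have h := Real.exp_one_lt_d9; linarith only [h]
  have hL1 : 1 ≤ L := by
    rw [hLdef]
    calc (1:ℝ) = Real.log (Real.exp 1) := (Real.log_exp 1).symm
      _ ≤ Real.log ((d:ℝ)^H) := Real.log_le_log (Real.exp_pos 1) (by linarith only [he1, hn3])
  have hlogd : 1 ≤ Real.log d := by
    calc (1:ℝ) = Real.log (Real.exp 1) := (Real.log_exp 1).symm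
      _ ≤ Real.log d := Real.log_le_log (Real.exp_pos 1) (by linarith only [he1, hd3])
  have hHL : (H:ℝ) ≤ L := by
    rw [hLdef, Real.log_pow]
    calc (H:ℝ) = (H:ℝ) * 1 := (mul_one _).symm
      _ ≤ (H:ℝ) * Real.log d := by
          apply mul_le_mul_of_nonneg_left hlogd (Nat.cast_nonneg H)
  have hH1 : (1:ℝ) ≤ (H:ℝ) := by exact_mod_cast hH
  have hHpos : (0:ℝ) < H := by linarith only [hH1]
  have hC' : (20:ℝ) ≤ (6*D+20)/z := arith_hC' hz0 hz1 hD
  have hk1 : (1:ℝ) ≤ (k:ℝ) := arith_k1 hC' hL1 hk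
  have hkpos : (0:ℝ) < k := by linarith only [hk1]
  have hapos : (4:ℝ) ≤ a := arith_apos hz0 hz1 hL1 ha
  have hr1 : (1:ℝ) ≤ (k:ℝ) ^ ((2:ℝ)/3) := Real.one_le_rpow hk1 (by norm_num)
  set r := (k:ℝ) ^ ((2:ℝ)/3) with hrdef
  clear_value z L n r
  have hpile : pins ≤ 1/(12 * r * a) :=
    arith_ps hd3 hr1 hapos hα0 hα1 (le_trans (by linarith only [hpd0]) hpsum)
  have hpdle : pdel ≤ 1/(12 * r * a) :=
    arith_ps hd3 hr1 hapos hα0 hα1 (le_trans (by linarith only [hpi0]) hpsum)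
  have hfrac : 1/(12 * r * a) ≤ 1/48 := arith_frac hr1 hapos
  have hpi1 : pins ≤ 1 := by linarith only [hpile, hfrac]
  have hpd1 : pdel ≤ 1 := by linarith only [hpdle, hfrac]
  -- T
  set x := z * k / (2 * H) with hxdef
  have hxpos : 0 < x := div_pos (mul_pos hz0 hkpos) (by linarith only [hHpos])
  set T := ⌊x⌋₊ with hTdef
  have hTle : (T:ℝ) ≤ x := Nat.floor_le (le_of_lt hxpos)
  have hTge : x ≤ (T:ℝ) + 1 := le_of_lt (Nat.lt_floor_add_one x)
  clear_value T x
  have hxge : (6*D+20)/2 * L^2 ≤ x := hxdef ▸ arith_xge hz0 hL1 hHL hHpos hD hk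
  have hHT : (H:ℝ) * T ≤ z * k / 2 := by
    have h := mul_le_mul_of_nonneg_left hTle (le_of_lt hHpos)
    rw [hxdef] at h
    calc (H:ℝ) * T ≤ (H:ℝ) * (z * k / (2*H)) := h
      _ = z * k / 2 := by field_simp
  -- window facts
  have hwindow : ∀ m : ℕ, |(m:ℝ) - k| ≤ (H:ℝ) * T →
      (m:ℝ) ≤ 3/2 * k ∧ (1-ζ)*k ≤ m ∧ (m:ℝ) ≤ (1+ζ)*k := by
    intro m hm
    rw [abs_le] at hm
    have h1 : (m:ℝ) - k ≤ z * k / 2 := le_trans hm.2 hHT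
    have h2 : -(z * k / 2) ≤ (m:ℝ) - k := le_trans (neg_le_neg hHT) hm.1
    exact arith_window hz0 hz1 hzζ hζ hkpos h1 h2
  -- hsmall
  have hza : 4 * (H:ℝ) ≤ z * a := arith_za hz0 hHL ha
  have hsmall : ∀ m : ℕ, |(m:ℝ) - k| ≤ (H:ℝ) * T →
      6 * m * pins ≤ (T:ℝ)+1 ∧ 6 * m * pdel ≤ (T:ℝ)+1 := by
    intro m hm
    have hm32 : (m:ℝ) ≤ 3/2 * k := (hwindow m hm).1
    have hm0 : (0:ℝ) ≤ (m:ℝ) := Nat.cast_nonneg m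
    have hxT : z * k / (2*(H:ℝ)) ≤ (T:ℝ) + 1 := by rw [← hxdef]; exact hTge
    exact ⟨arith_small hm32 hm0 hkpos hr1 hapos hz0 hHpos hza hpi0 hpile hxT,
      arith_small hm32 hm0 hkpos hr1 hapos hz0 hHpos hza hpd0 hpdle hxT⟩
  -- hgood
  set good : ℕ → Bool :=
    fun m => decide ((1 - ζ) * k ≤ (m : ℝ) ∧ (m : ℝ) ≤ (1 + ζ) * k) with hgooddef
  have hgood : ∀ m : ℕ, |(m:ℝ) - k| ≤ (H:ℝ) * T → good m = true := by
    intro m hm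
    have hw := hwindow m hm
    simp only [hgooddef, decide_eq_true_eq]
    exact ⟨hw.2.1, hw.2.2⟩
  -- main bound
  have hmain := allGood_false_le pins pdel hpi0 hpi1 hpd0 hpd1 good d T k H hgood hsmall
    H le_rfl k (by simp)
  -- numeric bound
  have hNle : ((Ntree d H : ℝ)) ≤ 2 * n := by
    have h1 := Ntree_le d (by omega) H
    have h2 : ((Ntree d H : ℝ)) + 2 ≤ 2 * (d:ℝ)^H := by exact_mod_cast h1
    rw [hndef]; linarith only [h2]
  have hTbig : (3*D+10) * L ≤ (T:ℝ) + 1 := arith_Tbig hD hL1 hxge hTge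
  have hpow35 : ((3:ℝ)/5)^(T+1) ≤ Real.exp (-(2/5) * ((T:ℝ)+1)) := by
    have hb : (3:ℝ)/5 ≤ Real.exp (-(2/5)) := by
      have h := Real.add_one_le_exp (-(2/5:ℝ)); linarith only [h]
    calc ((3:ℝ)/5)^(T+1) ≤ (Real.exp (-(2/5)))^(T+1) :=
          pow_le_pow_left₀ (by norm_num) hb _
      _ = Real.exp (-(2/5) * ((T:ℝ)+1)) := by
          rw [← Real.exp_nat_mul]; congr 1; push_cast; ring
  have hfinal : 2 * n * (2 * ((3:ℝ)/5)^(T+1)) ≤ n ^ (-D) := by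
    have hnD : n ^ (-D) = Real.exp (L * (-D)) := by
      rw [Real.rpow_def_of_pos hnpos, hLdef]
    have hnexp : n = Real.exp L := by rw [hLdef, Real.exp_log hnpos]
    have h4 : (4:ℝ) ≤ Real.exp 2 := four_le_exp_two
    calc 2 * n * (2 * ((3:ℝ)/5)^(T+1)) = 4 * (n * ((3:ℝ)/5)^(T+1)) := by ring
      _ ≤ Real.exp 2 * (Real.exp L * Real.exp (-(2/5) * ((T:ℝ)+1))) := by
          apply mul_le_mul h4 _ _ (Real.exp_nonneg 2)
          · rw [hnexp]
            exact mul_le_mul_of_nonneg_left hpow35 (Real.exp_nonneg L)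
          · positivity
      _ = Real.exp (2 + (L + (-(2/5) * ((T:ℝ)+1)))) := by
          rw [← Real.exp_add, ← Real.exp_add]
      _ ≤ Real.exp (L * (-D)) := by
          apply Real.exp_le_exp.2
          have h := arith_exp hD hL1 hTbig
          linarith only [h]
      _ = n ^ (-D) := hnD.symm
  -- put together
  set p := allGood pins pdel good d H k with hpdef
  have hfalse : p false ≤ ENNReal.ofReal (n ^ (-D)) := by
    calc p false ≤ (Ntree d H : ℝ≥0∞) * ENNReal.ofReal (2 * (3/5:ℝ)^(T+1)) := hmain
      _ = ENNReal.ofReal ((Ntree d H : ℝ) * (2 * (3/5:ℝ)^(T+1))) := by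
          rw [← ENNReal.ofReal_natCast (Ntree d H), ← ENNReal.ofReal_mul (Nat.cast_nonneg _)]
      _ ≤ ENNReal.ofReal (n ^ (-D)) := by
          apply ENNReal.ofReal_le_ofReal
          calc (Ntree d H : ℝ) * (2 * (3/5:ℝ)^(T+1))
              ≤ 2 * n * (2 * (3/5:ℝ)^(T+1)) := by
                apply mul_le_mul_of_nonneg_right hNle (by positivity)
            _ ≤ n ^ (-D) := hfinal
  have hsum : p false + p true = 1 := by
    rw [← tsum_bool p]; exact p.tsum_coe
  have hft : (p false).toReal + (p true).toReal = 1 := by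
    rw [← ENNReal.toReal_add (p.apply_ne_top false) (p.apply_ne_top true), hsum,
      ENNReal.toReal_one]
  have hfr : (p false).toReal ≤ n ^ (-D) :=
    ENNReal.toReal_le_of_le_ofReal (Real.rpow_nonneg (le_of_lt hnpos) _) hfalse
  rw [ge_iff_le]
  linarith only [hft, hfr]
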